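/- Let a = (a_1, ..., a_m) be a tuple of distinct elements of a field F, m ≥ 2, and let E(a) be the m×m matrix whose (l, j) entry (for l = 0, ..., m-1 and j = 1, ..., m) is e_l(â_j), the l-th elementary symmetric polynomial in the tuple â_j obtained by deleting the j-th entry of a. Then det E(a) = (-1)^{m(m-1)/2} V(a), where V(a) = Π_{1≤j<k≤m}(a_k - a_j). -/

import Mathlib

/-- The Vandermonde product `V(a) = ∏_{i<j} (a j - a i)`. -/
noncomputable def vdm {F : Type*} [CommRing F] {n : ℕ} (a : Fin n → F) : F :=
  ∏ i : Fin n, ∏ j ∈ Finset.Ioi i, (a j - a i)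

/-- The tuple `â_j` obtained from `a` by deleting its `j`-th entry. -/
def removeNth {F : Type*} {n : ℕ} (a : Fin n → F) (j : Fin n) : Fin (n - 1) → F :=
  fun i =>
    if h : (i : ℕ) < (j : ℕ) then a ⟨i, by have := j.isLt; omega⟩
    else a ⟨i + 1, by have := i.isLt; have := j.isLt; omega⟩

/-- The `l`-th elementary symmetric polynomial evaluated at the tuple `a`. -/
noncomputable def esym {F : Type*} [CommSemiring F] {n : ℕ} (l : ℕ) (a : Fin n → F) : F :=
  ∑ s ∈ Finset.univ.powersetCard l, ∏ i ∈ s, a i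

open Finset Equiv Equiv.Perm

lemma myRevPerm_succ (n : ℕ) :
    (Fin.revPerm : Equiv.Perm (Fin (n + 1))) =
      Equiv.Perm.decomposeFin.symm (Fin.last n, Fin.revPerm * finRotate n) := by
  ext i
  refine Fin.cases ?_ (fun x => ?_) i
  · simp
  · rw [Equiv.Perm.decomposeFin_symm_apply_succ]
    cases n with
    | zero => exact x.elim0
    | succ k =>
      simp only [Perm.mul_apply, Fin.revPerm_apply]
      by_cases hx : x = Fin.last k
      · subst hx
        simp [Fin.rev_zero, swap_apply_right, Fin.succ_last, Fin.rev_last]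
      · have h1 : (finRotate (k + 1) x : ℕ) = (x : ℕ) + 1 := by
          rw [coe_finRotate, if_neg hx]
        have hxk : (x : ℕ) < k := by
          have := Fin.lt_last_iff_ne_last.mpr hx
          simpa [Fin.lt_def] using this
        have hval : (((finRotate (k + 1) x).rev.succ : Fin (k + 2)) : ℕ) = k - (x : ℕ) := by
          rw [Fin.val_succ, Fin.val_rev, h1]
          omega
        have hne0 : ((finRotate (k + 1) x).rev.succ : Fin (k + 2)) ≠ 0 := by
          rw [Ne, Fin.ext_iff, hval, Fin.val_zero]
          omega
        have hnelast : ((finRotate (k + 1) x).rev.succ : Fin (k + 2)) ≠ Fin.last (k + 1) := by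
          rw [Ne, Fin.ext_iff, hval, Fin.val_last]
          omega
        rw [swap_apply_of_ne_of_ne hne0 hnelast, hval, Fin.val_rev, Fin.val_succ]
        omega

lemma mySign_revPerm : ∀ n : ℕ, Perm.sign (Fin.revPerm : Equiv.Perm (Fin n)) =
    (-1) ^ (n * (n - 1) / 2)
  | 0 => by
    have : (Fin.revPerm : Equiv.Perm (Fin 0)) = 1 := Subsingleton.elim _ _
    simp [this]
  | 1 => by
    have : (Fin.revPerm : Equiv.Perm (Fin 1)) = 1 := Subsingleton.elim _ _
    simp [this]
  | (n + 2) => by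
    have hlast : (Fin.last (n + 1) : Fin (n + 2)) ≠ 0 := by
      simp [Fin.ext_iff]
    rw [myRevPerm_succ, Equiv.Perm.decomposeFin.symm_sign, map_mul,
      mySign_revPerm (n + 1), sign_finRotate, if_neg hlast]
    obtain ⟨c, hc⟩ := Nat.even_mul_succ_self n
    have e1 : (n + 2) * (n + 2 - 1) = c + c + 2 * (n + 1) := by
      show (n + 2) * (n + 1) = c + c + 2 * (n + 1)
      rw [← hc]; ring
    have e2 : (n + 1) * (n + 1 - 1) = c + c := by
      show (n + 1) * n = c + c
      rw [← hc]; ring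
    have e3 : (n + 2) * (n + 2 - 1) / 2 = (n + 1) * (n + 1 - 1) / 2 + (n + 1) := by
      omega
    rw [e3, pow_add, pow_succ]
    simp [mul_comm, mul_assoc, mul_left_comm]

lemma myProdNeg {F : Type*} [CommRing F] {α : Type*} (t : Finset α) (f : α → F) :
    ∏ i ∈ t, -f i = (-1 : F) ^ t.card * ∏ i ∈ t, f i := by
  rw [← Finset.prod_const (-1 : F), ← Finset.prod_mul_distrib]
  exact Finset.prod_congr rfl fun i _ => (neg_one_mul _).symm

lemma myVieta {F : Type*} [CommRing F] {n : ℕ} (b : Fin n → F) (x : F) :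
    ∑ l : Fin (n + 1), (-1 : F) ^ (l : ℕ) * esym l b * x ^ (n - (l : ℕ)) =
      ∏ k : Fin n, (x - b k) := by
  have h := Finset.prod_add (fun k : Fin n => -b k) (fun _ => x) Finset.univ
  have hL : ∏ i : Fin n, (-b i + x) = ∏ k : Fin n, (x - b k) := by
    apply Finset.prod_congr rfl; intro k _; ring
  rw [hL] at h
  rw [h, Finset.sum_powerset]
  rw [Fin.sum_univ_eq_sum_range (fun l => (-1 : F) ^ l * esym l b * x ^ (n - l))]
  rw [Finset.card_univ, Fintype.card_fin]
  apply Finset.sum_congr rfl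
  intro l _
  rw [esym, Finset.mul_sum, Finset.sum_mul]
  apply Finset.sum_congr rfl
  intro t ht
  have hcard : t.card = l := (Finset.mem_powersetCard.mp ht).2
  have h1 : ∏ i ∈ t, -b i = (-1 : F) ^ l * ∏ i ∈ t, b i := by
    rw [myProdNeg, hcard]
  have h2 : ∏ i ∈ Finset.univ \ t, x = x ^ (n - l) := by
    rw [Finset.prod_const, Finset.card_sdiff_of_subset (Finset.subset_univ t), Finset.card_univ,
      Fintype.card_fin, hcard]
  rw [h1, h2]

lemma myRemoveNth {F : Type*} {n : ℕ} (a : Fin (n + 1) → F) (j : Fin (n + 1)) (k : Fin n) :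
    removeNth a j k = a (j.succAbove k) := by
  rw [removeNth, Fin.succAbove]
  by_cases h : (k : ℕ) < (j : ℕ)
  · rw [dif_pos h, if_pos (by simpa [Fin.lt_def] using h)]
    congr 1
  · rw [dif_neg h, if_neg (by simpa [Fin.lt_def] using h)]
    congr 1

theorem stmt1 {F : Type*} [Field F] (m : ℕ) (hm : 2 ≤ m) (a : Fin m → F)
    (ha : Function.Injective a) :
    Matrix.det (Matrix.of fun l j : Fin m => esym l.val (removeNth a j)) =
      (-1 : F) ^ (m * (m - 1) / 2) * vdm a := by
  obtain ⟨n, rfl⟩ : ∃ n, m = n + 1 := ⟨m - 1, by omega⟩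
  set s : ℕ := (n + 1) * n / 2 with hs
  have hs' : (n + 1) * ((n + 1) - 1) / 2 = s := rfl
  -- matrices
  set E : Matrix (Fin (n + 1)) (Fin (n + 1)) F :=
    Matrix.of fun l j : Fin (n + 1) => esym l.val (removeNth a j) with hE
  set E' : Matrix (Fin (n + 1)) (Fin (n + 1)) F :=
    Matrix.of fun l j : Fin (n + 1) => (-1 : F) ^ (l : ℕ) * E l j with hE'
  set B : Matrix (Fin (n + 1)) (Fin (n + 1)) F :=
    Matrix.of fun l i : Fin (n + 1) => a i ^ (n - (l : ℕ)) with hB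
  set D : Matrix (Fin (n + 1)) (Fin (n + 1)) F :=
    Matrix.diagonal (fun j => ∏ k : Fin n, (a j - a (j.succAbove k))) with hD
  -- the key matrix identity
  have key : E'.transpose * B = D := by
    ext j i
    rw [Matrix.mul_apply]
    have : ∀ l : Fin (n + 1), E'.transpose j l * B l i =
        (-1 : F) ^ (l : ℕ) * esym l.val (removeNth a j) * a i ^ (n - (l : ℕ)) := by
      intro l; rw [Matrix.transpose_apply]; rfl
    rw [Finset.sum_congr rfl fun l _ => this l, myVieta (n := n) (removeNth a j) (a i)]
    have hrw : ∏ k : Fin n, (a i - removeNth a j k) =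
        ∏ k : Fin n, (a i - a (j.succAbove k)) :=
      Finset.prod_congr rfl fun k _ => by rw [myRemoveNth]
    rw [hrw, hD]
    by_cases hij : j = i
    · subst hij
      rw [Matrix.diagonal_apply_eq]
    · rw [Matrix.diagonal_apply_ne _ hij]
      obtain ⟨k, hk⟩ := Fin.exists_succAbove_eq (Ne.symm hij)
      exact Finset.prod_eq_zero (Finset.mem_univ k) (by rw [hk, sub_self])
  -- determinants of the pieces
  have hsum : ∑ l : Fin (n + 1), (l : ℕ) = s := by
    rw [Fin.sum_univ_eq_sum_range (fun l => l), Finset.sum_range_id]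
    rfl
  have hprod_neg : ∏ l : Fin (n + 1), (-1 : F) ^ (l : ℕ) = (-1 : F) ^ s := by
    rw [Finset.prod_pow_eq_pow_sum, hsum]
  have hdetE' : E'.det = (-1 : F) ^ s * E.det := by
    rw [hE', Matrix.det_mul_column, hprod_neg]
  -- det B
  have hdetB : B.det = (-1 : F) ^ s * vdm a := by
    have hBeq : B = ((Matrix.vandermonde a).transpose).submatrix Fin.revPerm id := by
      ext l i
      simp only [hB, Matrix.of_apply, Matrix.transpose_apply, Matrix.vandermonde_apply,
        Matrix.submatrix_apply, Fin.revPerm_apply, id_eq]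
      congr 1
      rw [Fin.val_rev]
      omega
    rw [hBeq, Matrix.det_permute, Matrix.det_transpose, Matrix.det_vandermonde,
      mySign_revPerm]
    have : (n + 1) * (n + 1 - 1) / 2 = s := rfl
    rw [this, vdm]
    push_cast
    ring
  -- det D
  have himg : ∀ j : Fin (n + 1), Finset.image j.succAbove Finset.univ = {j}ᶜ := by
    intro j
    ext i
    simp only [Finset.mem_image, Finset.mem_univ, true_and, Finset.mem_compl,
      Finset.mem_singleton]
    constructor
    · rintro ⟨k, rfl⟩; exact Fin.succAbove_ne j k
    · intro h; exact Fin.exists_succAbove_eq h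
  have hcompl : ∀ j : Fin (n + 1), ({j}ᶜ : Finset (Fin (n + 1))) =
      Finset.Iio j ∪ Finset.Ioi j := by
    intro j
    ext i
    simp only [Finset.mem_compl, Finset.mem_singleton, Finset.mem_union, Finset.mem_Iio,
      Finset.mem_Ioi]
    exact ne_iff_lt_or_gt
  have hdisj : ∀ j : Fin (n + 1), Disjoint (Finset.Iio j) (Finset.Ioi j) := by
    intro j
    rw [Finset.disjoint_left]
    intro i h1 h2
    exact absurd (lt_trans (Finset.mem_Iio.mp h1) (Finset.mem_Ioi.mp h2)) (lt_irrefl i)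
  have hdetD : D.det = ((-1 : F) ^ s * vdm a) * vdm a := by
    rw [hD, Matrix.det_diagonal]
    have step1 : ∀ j : Fin (n + 1), ∏ k : Fin n, (a j - a (j.succAbove k)) =
        (∏ i ∈ Finset.Iio j, (a j - a i)) * ∏ i ∈ Finset.Ioi j, (a j - a i) := by
      intro j
      have h0 := Finset.prod_image (s := Finset.univ) (f := fun i => a j - a i)
        (g := j.succAbove) (fun x _ y _ h => Fin.succAbove_right_injective h)
      rw [himg j, hcompl j, Finset.prod_union (hdisj j)] at h0
      exact h0.symm
    rw [Finset.prod_congr rfl fun j _ => step1 j, Finset.prod_mul_distrib]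
    have f1 : ∏ j : Fin (n + 1), ∏ i ∈ Finset.Iio j, (a j - a i) = vdm a := by
      rw [vdm]
      exact Finset.prod_comm' (by intro x y; simp)
    have f2 : ∏ j : Fin (n + 1), ∏ i ∈ Finset.Ioi j, (a j - a i) =
        (-1 : F) ^ s * vdm a := by
      have : ∀ j : Fin (n + 1), ∏ i ∈ Finset.Ioi j, (a j - a i) =
          (-1 : F) ^ (Finset.Ioi j).card * ∏ i ∈ Finset.Ioi j, (a i - a j) := by
        intro j
        rw [← myProdNeg]
        exact Finset.prod_congr rfl fun i _ => (neg_sub _ _).symm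
      rw [Finset.prod_congr rfl fun j _ => this j, Finset.prod_mul_distrib,
        Finset.prod_pow_eq_pow_sum]
      have hcard : ∑ j : Fin (n + 1), (Finset.Ioi j).card = s := by
        have : ∀ j : Fin (n + 1), (Finset.Ioi j).card = n - (j : ℕ) := by
          intro j; rw [Fin.card_Ioi]; omega
        rw [Finset.sum_congr rfl fun j _ => this j,
          Fin.sum_univ_eq_sum_range (fun j => n - j)]
        have hrefl := Finset.sum_range_reflect (fun i => i) (n + 1)
        calc ∑ i ∈ Finset.range (n + 1), (n - i)
            = ∑ i ∈ Finset.range (n + 1), (n + 1 - 1 - i) := by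
              apply Finset.sum_congr rfl
              intro i hi
              have := Finset.mem_range.mp hi
              omega
          _ = ∑ i ∈ Finset.range (n + 1), i := hrefl
          _ = (n + 1) * n / 2 := Finset.sum_range_id (n + 1)
      rw [hcard, vdm]
    rw [f1, f2]
    ring
  -- put it together
  have hvdm : vdm a ≠ 0 := by
    rw [vdm]
    apply Finset.prod_ne_zero_iff.mpr
    intro i _
    apply Finset.prod_ne_zero_iff.mpr
    intro j hj
    have : i ≠ j := ne_of_lt (Finset.mem_Ioi.mp hj)
    exact sub_ne_zero.mpr fun h => this (ha h.symm)
  have hdets : E'.det * B.det = D.det := by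
    rw [← Matrix.det_transpose E', ← Matrix.det_mul, key]
  rw [hdetE', hdetB, hdetD] at hdets
  have hpow : (-1 : F) ^ s * (-1 : F) ^ s = 1 := by
    rw [← pow_add]
    exact Even.neg_one_pow ⟨s, rfl⟩
  have : E.det * vdm a = ((-1 : F) ^ s * vdm a) * vdm a := by
    have := hdets
    calc E.det * vdm a = 1 * (E.det * vdm a) := by ring
      _ = ((-1 : F) ^ s * (-1 : F) ^ s) * (E.det * vdm a) := by rw [hpow]
      _ = ((-1 : F) ^ s * E.det) * ((-1 : F) ^ s * vdm a) := by ring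
      _ = ((-1 : F) ^ s * vdm a) * vdm a := hdets
  have final := mul_right_cancel₀ hvdm this
  rw [hs'] at *
  exact final
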